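/- For every RVT code word W whose Puiseux characteristic is [λ₀; λ₁, …, λ_g]: W begins with RR if and only if λ₁ > 2λ₀ (with the convention that a word of all R's, having PC [1;], counts as satisfying this when g = 0 vacuously); W begins with RVT^τR or equals RVT^τ if and only if λ₀ = (τ+2)(λ₁−λ₀) and λ₁ = (τ+3)(λ₁−λ₀); and W begins with RVT^τV if and only if (τ+1)(λ₁−λ₀) < λ₀ < (τ+2)(λ₁−λ₀). -/

import Mathlib

/-- The three symbols of an RVT code word. -/
inductive RVT : Type
  | R | V | T
deriving DecidableEq, Repr

/-- Replace a leading run of `T`'s by `R`'s. -/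
def deT : List RVT → List RVT
  | RVT.T :: xs => RVT.R :: deT xs
  | xs => xs

/-- If the word begins with `V`, replace that `V` and the immediately
following `T`'s by `R`'s. -/
def reg : List RVT → List RVT
  | RVT.V :: xs => RVT.R :: deT xs
  | xs => xs

/-- The lifted word `L(W)`: remove the first symbol (an `R`), then replace a
leading maximal critical block `V Tᵗ` by `R^(t+1)`. -/
def lift (w : List RVT) : List RVT := reg w.tail

/-- Length of the leading run of `T`'s. -/
def countT : List RVT → ℕ
  | RVT.T :: xs => countT xs + 1
  | _ => 0

/-- Fueled version of the front-end recursion for the Puiseux characteristic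
(Theorem PCfront): base case `[1]` on all-`R` words; given
`PC(L(W)) = [l0; l1, ..., lg]`,
(A) if `W` begins `RR` then `PC(W) = [l0; l1+l0, ..., lg+l0]`;
(B) if `W` begins `R V T^t R` or `W = R V T^t` then
`PC(W) = [(t+2)l0; (t+3)l0, l1+l0, ..., lg+l0]`;
(C) if `W` begins `R V T^t V` then `PC(W) = [l1; l1+l0, ..., lg+l0]`. -/
def PCf : ℕ → List RVT → List ℕ
  | 0, _ => [1]
  | _ + 1, [] => [1]
  | fuel + 1, w@(_ :: rest) =>
    if w.all (· = RVT.R) then [1]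
    else
      let p := PCf fuel (lift w)
      let l0 := p.headD 1
      let tl := p.tail
      match rest with
      | RVT.V :: xs =>
        match xs.drop (countT xs) with
        | RVT.V :: _ => tl.headD 1 :: tl.map (· + l0)                                -- case (C)
        | _ => ((countT xs + 2) * l0) :: ((countT xs + 3) * l0) :: tl.map (· + l0)   -- case (B)
      | _ => l0 :: tl.map (· + l0)                                                   -- case (A)

/-- The Puiseux characteristic `PC(W)` computed by the front-end recursion. -/
def PC (w : List RVT) : List ℕ := PCf w.length w

/-- A valid RVT code word: begins with `R`, and `T` occurs only immediately
after a `V` or a `T`. -/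
def ValidRVT (w : List RVT) : Prop :=
  w.head? = some RVT.R ∧
  ∀ i, w[i + 1]? = some RVT.T → (w[i]? = some RVT.V ∨ w[i]? = some RVT.T)

/-- The function `E` on strings, with `E_T[a;b] = [a;a+b]`, `E_V[a;b] = [b;a+b]`,
`E_R = E_T`, and base value `E(empty) = [1;2]`; the leftmost symbol acts last. -/
def Efun : List RVT → ℕ × ℕ
  | [] => (1, 2)
  | RVT.V :: q => ((Efun q).2, (Efun q).1 + (Efun q).2)
  | _ :: q => ((Efun q).1, (Efun q).1 + (Efun q).2)

/-- The Euclidean-type recursion: `Euc(1,2)` is the empty word; for coprime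
`a < b`, if `b < 2a` then `Euc(a,b) = V · Euc(b-a,a)`, and if `b > 2a` then
`Euc(a,b) = T · Euc(a,b-a)`. -/
def Euc (a b : ℕ) : List RVT :=
  if a = 1 ∧ b = 2 then []
  else if _h1 : 0 < a ∧ a < b ∧ b < 2 * a then RVT.V :: Euc (b - a) a
  else if _h2 : 0 < a ∧ a < b ∧ 2 * a < b then RVT.T :: Euc a (b - a)
  else []
termination_by a + b
decreasing_by all_goals omega
section Helpers
open RVT

lemma deT_length (xs : List RVT) : (deT xs).length = xs.length := by
  induction xs with
  | nil => rfl
  | cons x xs ih => cases x <;> simp [deT, ih]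

lemma reg_length (xs : List RVT) : (reg xs).length = xs.length := by
  cases xs with
  | nil => rfl
  | cons x xs => cases x <;> simp [reg, deT_length]

lemma lift_length (x : RVT) (rest : List RVT) : (lift (x :: rest)).length = rest.length := by
  simp [lift, reg_length]

lemma countT_spec (xs : List RVT) :
    xs = List.replicate (countT xs) RVT.T ++ xs.drop (countT xs) ∧
      (xs.drop (countT xs)).head? ≠ some RVT.T := by
  induction xs with
  | nil => simp [countT]
  | cons x xs ih =>
    cases x with
    | T =>
      refine ⟨?_, ?_⟩
      · show RVT.T :: xs = List.replicate (countT xs + 1) RVT.T ++ _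
        rw [List.replicate_succ]
        simpa [countT] using ih.1
      · simpa [countT] using ih.2
    | R => simp [countT]
    | V => simp [countT]

lemma countT_replicate_append (s : ℕ) (z : List RVT) (hz : z.head? ≠ some RVT.T) :
    countT (List.replicate s RVT.T ++ z) = s := by
  induction s with
  | zero =>
    simp only [List.replicate_zero, List.nil_append]
    cases z with
    | nil => rfl
    | cons a l => cases a <;> simp [countT] at hz ⊢
  | succ s ih => simp [List.replicate_succ, countT, ih]

lemma deT_replicate_append (s : ℕ) (z : List RVT) (hz : z.head? ≠ some RVT.T) :
    deT (List.replicate s RVT.T ++ z) = List.replicate s RVT.R ++ z := by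
  induction s with
  | zero =>
    simp only [List.replicate_zero, List.nil_append]
    cases z with
    | nil => rfl
    | cons a l => cases a <;> simp [deT] at hz ⊢
  | succ s ih => simp [List.replicate_succ, deT, ih]

/-- the no-T-after-R condition -/
def NoTR (w : List RVT) : Prop :=
  ∀ i, w[i + 1]? = some RVT.T → (w[i]? = some RVT.V ∨ w[i]? = some RVT.T)

lemma valid_def (w : List RVT) : ValidRVT w ↔ w.head? = some RVT.R ∧ NoTR w := Iff.rfl

lemma NoTR_tail {x : RVT} {xs : List RVT} (h : NoTR (x :: xs)) : NoTR xs := by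
  intro i hi
  have := h (i + 1) (by simpa using hi)
  simpa using this

lemma NoTR_head {x : RVT} {xs : List RVT} (h : NoTR (x :: xs))
    (hT : xs.head? = some RVT.T) : x = RVT.V ∨ x = RVT.T := by
  have := h 0 (by simpa [List.getElem?_cons_succ, ← List.head?_eq_getElem?] using hT)
  simpa using this

lemma NoTR_cons {x : RVT} {xs : List RVT} (h : NoTR xs)
    (hx : xs.head? = some RVT.T → x = RVT.V ∨ x = RVT.T) : NoTR (x :: xs) := by
  intro i hi
  cases i with
  | zero =>
    have : xs.head? = some RVT.T := by
      simpa [List.head?_eq_getElem?] using hi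
    rcases hx this with h' | h' <;> simp [h']
  | succ i =>
    have := h i (by simpa using hi)
    simpa using this

lemma NoTR_drop {xs : List RVT} (h : NoTR xs) (k : ℕ) : NoTR (xs.drop k) := by
  intro i hi
  rw [List.getElem?_drop] at hi
  rw [List.getElem?_drop]
  exact h (k + i) (by rw [show k + i + 1 = k + (i+1) by omega]; exact hi)

end Helpers
lemma PCf_C (n : ℕ) (x : RVT) (xs u : List RVT) (s : ℕ)
    (h : ¬ ((x :: RVT.V :: xs).all (· = RVT.R) = true))
    (h1 : countT xs = s) (h2 : xs.drop s = RVT.V :: u) :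
    PCf (n+1) (x :: RVT.V :: xs) =
      (PCf n (lift (x :: RVT.V :: xs))).tail.headD 1 ::
        (PCf n (lift (x :: RVT.V :: xs))).tail.map (· + (PCf n (lift (x :: RVT.V :: xs))).headD 1) := by
  simp only [PCf, if_neg h, h1, h2]

lemma PCf_B (n : ℕ) (x : RVT) (xs z : List RVT) (s : ℕ)
    (h : ¬ ((x :: RVT.V :: xs).all (· = RVT.R) = true))
    (h1 : countT xs = s) (h2 : xs.drop s = z)
    (hz : ∀ u, z ≠ RVT.V :: u) :
    PCf (n+1) (x :: RVT.V :: xs) =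
      ((s + 2) * (PCf n (lift (x :: RVT.V :: xs))).headD 1) ::
      ((s + 3) * (PCf n (lift (x :: RVT.V :: xs))).headD 1) ::
        (PCf n (lift (x :: RVT.V :: xs))).tail.map (· + (PCf n (lift (x :: RVT.V :: xs))).headD 1) := by
  simp only [PCf, if_neg h, h1, h2]

section Helpers2

lemma NoTR_replicateR (k : ℕ) {z : List RVT} (hz : NoTR z) (hzT : z.head? ≠ some RVT.T) :
    NoTR (List.replicate k RVT.R ++ z) := by
  induction k with
  | zero => simpa using hz
  | succ k ih =>
    rw [List.replicate_succ, List.cons_append]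
    refine NoTR_cons ih ?_
    intro hT
    exfalso
    cases k with
    | zero => simp at hT; exact hzT hT
    | succ k => simp [List.replicate_succ] at hT

lemma split_lead : ∀ (w : List RVT), NoTR w → w.head? ≠ some RVT.T →
    (w.all (· = RVT.R) = true) ∨ ∃ k u, w = List.replicate k RVT.R ++ RVT.V :: u := by
  intro w
  induction w with
  | nil => intro _ _; left; rfl
  | cons x xs ih =>
    intro h hx
    cases x with
    | V => exact Or.inr ⟨0, xs, rfl⟩
    | T => exact absurd hx (by simp)
    | R =>
      have hxs : xs.head? ≠ some RVT.T := by
        intro hh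
        rcases NoTR_head h hh with h' | h' <;> exact RVT.noConfusion h'
      rcases ih (NoTR_tail h) hxs with hall | ⟨k, u, hk⟩
      · left; simpa using hall
      · right; exact ⟨k + 1, u, by rw [List.replicate_succ, List.cons_append, hk]⟩

lemma repl_le {a j : ℕ} {u u' : List RVT}
    (h : List.replicate a RVT.R ++ u = List.replicate j RVT.R ++ RVT.V :: u') : a ≤ j := by
  by_contra hlt
  push_neg at hlt
  have h2 := congrArg (fun l => l[j]?) h
  rw [List.getElem?_append, List.getElem?_append] at h2
  simp [hlt, List.getElem?_replicate] at h2

lemma not_all_of_V {k : ℕ} {u : List RVT} :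
    ¬ ((List.replicate k RVT.R ++ RVT.V :: u).all (· = RVT.R) = true) := by
  intro h
  rw [List.all_eq_true] at h
  have := h RVT.V (by simp)
  simp at this

lemma PCf_allR (n : ℕ) (w : List RVT) (h : w.all (· = RVT.R) = true) : PCf n w = [1] := by
  cases n with
  | zero => rfl
  | succ n =>
    cases w with
    | nil => rfl
    | cons x rest => simp only [PCf, if_pos h]

lemma chain_map_add (m : ℕ) (l : List ℕ) (h : List.Chain' (· < ·) l) :
    List.Chain' (· < ·) (l.map (· + m)) := by
  rw [List.Chain', List.isChain_map]
  exact List.IsChain.imp (by intro a b hh; omega) h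

lemma PCf_A (n : ℕ) (x : RVT) (u : List RVT)
    (h : ¬ ((x :: RVT.R :: u).all (· = RVT.R) = true)) :
    PCf (n + 1) (x :: RVT.R :: u) =
      (PCf n (lift (x :: RVT.R :: u))).headD 1 ::
        (PCf n (lift (x :: RVT.R :: u))).tail.map
          (· + (PCf n (lift (x :: RVT.R :: u))).headD 1) := by
  simp only [PCf, if_neg h]

lemma k_eq_one {k : ℕ} {xs u : List RVT} {x : RVT}
    (h : RVT.R :: RVT.V :: xs = List.replicate k RVT.R ++ x :: u) (hx : x ≠ RVT.R) :
    k = 1 ∧ x :: u = RVT.V :: xs := by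
  match k, h with
  | 0, h => rw [List.replicate_zero, List.nil_append] at h; cases h; exact absurd rfl hx
  | 1, h => rw [show List.replicate 1 RVT.R = [RVT.R] from rfl] at h; cases h; exact ⟨rfl, rfl⟩
  | (k+2), h => simp [List.replicate_succ] at h

end Helpers2
section Master

lemma NoTR_nil : NoTR ([] : List RVT) := by intro i hi; simp at hi

lemma chain_A {m : ℕ} {tl : List ℕ} (hm : 1 ≤ m) (hch : List.Chain' (· < ·) (m :: tl)) :
    List.Chain' (· < ·) (m :: tl.map (· + m)) := by
  rcases tl with _ | ⟨t2, tl2⟩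
  · exact List.isChain_singleton _
  · rw [List.map_cons, List.Chain', List.isChain_cons_cons]
    rw [List.Chain', List.isChain_cons_cons] at hch
    refine ⟨by omega, ?_⟩
    have := chain_map_add m _ hch.2
    simpa [List.Chain'] using this

lemma repl_cons (k : ℕ) (x : RVT) (l : List RVT) :
    List.replicate k x ++ x :: l = List.replicate (k + 1) x ++ l := by
  induction k with
  | zero => simp [List.replicate_succ]
  | succ k ih => simp only [List.replicate_succ, List.cons_append, ih]

lemma master : ∀ (n : ℕ) (w : List RVT), ValidRVT w → w.length ≤ n →
    (∃ m tl, PCf n w = m :: tl ∧ 1 ≤ m ∧ List.Chain' (· < ·) (m :: tl)) ∧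
    (∀ k u, w = List.replicate k RVT.R ++ RVT.V :: u →
      ∃ m t tl, PCf n w = m :: t :: tl ∧ k * m < t ∧ t < (k + 1) * m) := by
  intro n
  induction n with
  | zero =>
    intro w hv hl
    rw [List.eq_nil_of_length_eq_zero (Nat.le_zero.mp hl)] at hv
    simp [ValidRVT] at hv
  | succ n ih =>
    intro w hv hl
    obtain ⟨hh, hno⟩ := hv
    rcases w with _ | ⟨x, rest⟩
    · simp at hh
    have hx : x = RVT.R := by simpa using hh
    subst hx
    by_cases hall : ((RVT.R :: rest).all (· = RVT.R) = true)
    · refine ⟨⟨1, [], PCf_allR _ _ hall, le_refl 1, List.isChain_singleton _⟩, ?_⟩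
      intro k u hw
      rw [hw] at hall
      exact absurd hall not_all_of_V
    · rcases rest with _ | ⟨y, xs0⟩
      · exact absurd (by decide) hall
      cases y with
      | T =>
        exfalso
        have := hno 0 (by simp)
        simp at this
      | R =>
        -- case A
        have hlift : lift (RVT.R :: RVT.R :: xs0) = RVT.R :: xs0 := rfl
        have hval : ValidRVT (RVT.R :: xs0) := ⟨rfl, NoTR_tail hno⟩
        have hlen : (RVT.R :: xs0).length ≤ n := by simp at hl ⊢; omega
        obtain ⟨⟨m, tl, hp, hm, hch⟩, h2⟩ := ih (RVT.R :: xs0) hval hlen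
        have hout : PCf (n+1) (RVT.R :: RVT.R :: xs0) = m :: tl.map (· + m) := by
          rw [PCf_A n _ _ hall, hlift, hp]
          rfl
        refine ⟨⟨m, tl.map (· + m), hout, hm, chain_A hm hch⟩, ?_⟩
        intro k u hw
        have hk2 : 2 ≤ k :=
          repl_le (show List.replicate 2 RVT.R ++ xs0 = _ from hw)
        obtain ⟨K, rfl⟩ : ∃ K, k = K + 2 := ⟨k - 2, by omega⟩
        have hw' : RVT.R :: xs0 = List.replicate (K + 1) RVT.R ++ RVT.V :: u := by
          rw [List.replicate_succ, List.cons_append] at hw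
          exact (List.cons.injEq _ _ _ _ ▸ hw : _ ∧ _).2
        obtain ⟨m', t', tl', hp', hlt1, hlt2⟩ := h2 (K + 1) u hw'
        have hout2 : PCf (n+1) (RVT.R :: RVT.R :: xs0)
            = m' :: (t' + m') :: tl'.map (· + m') := by
          rw [PCf_A n _ _ hall, hlift, hp']
          rfl
        refine ⟨m', t' + m', tl'.map (· + m'), hout2, ?_, ?_⟩
        · have e : (K + 2) * m' = (K + 1) * m' + m' := by ring
          linarith
        · have e : (K + 2 + 1) * m' = (K + 1 + 1) * m' + m' := by ring
          linarith
      | V =>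
        -- cases B and C
        obtain ⟨hxs, hzT⟩ := countT_spec xs0
        obtain ⟨s, hs⟩ : ∃ s, countT xs0 = s := ⟨_, rfl⟩
        obtain ⟨z, hz⟩ : ∃ z, xs0.drop s = z := ⟨_, rfl⟩
        rw [hs, hz] at hxs hzT
        have hnoz : NoTR z := by
          rw [← hz]
          exact NoTR_drop (NoTR_tail (NoTR_tail hno)) s
        have hdeT : deT xs0 = List.replicate s RVT.R ++ z := by
          conv_lhs => rw [hxs]
          exact deT_replicate_append s z hzT
        have hlift : lift (RVT.R :: RVT.V :: xs0) = List.replicate (s + 1) RVT.R ++ z := by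
          show reg (RVT.V :: xs0) = _
          rw [show reg (RVT.V :: xs0) = RVT.R :: deT xs0 from rfl, hdeT,
            List.replicate_succ, List.cons_append]
        have hlen : (lift (RVT.R :: RVT.V :: xs0)).length ≤ n := by
          rw [lift_length]
          simp at hl ⊢
          omega
        rcases z with _ | ⟨zh, zt⟩
        · -- z = [], case B with all-R lift
          have hliftR : lift (RVT.R :: RVT.V :: xs0) = List.replicate (s + 1) RVT.R := by
            simpa using hlift
          have hallR : ((List.replicate (s+1) RVT.R).all (· = RVT.R)) = true := by
            rw [List.all_eq_true]
            intro a ha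
            simp [List.eq_of_mem_replicate ha]
          have hp : PCf n (lift (RVT.R :: RVT.V :: xs0)) = [1] := by
            rw [hliftR]; exact PCf_allR _ _ hallR
          have hout : PCf (n+1) (RVT.R :: RVT.V :: xs0)
              = (s + 2) * 1 :: (s + 3) * 1 :: [] := by
            rw [PCf_B n RVT.R xs0 [] s hall hs hz (by simp), hp]
            rfl
          refine ⟨⟨(s+2)*1, [(s+3)*1], hout, by omega, ?_⟩, ?_⟩
          · rw [List.Chain', List.isChain_cons_cons]
            exact ⟨by omega, List.isChain_singleton _⟩
          · intro k u hw
            obtain ⟨hk1, _⟩ := k_eq_one hw (by decide)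
            subst hk1
            exact ⟨(s+2)*1, (s+3)*1, [], hout, by omega, by omega⟩
        · cases zh with
          | T => simp at hzT
          | V =>
            -- case C
            have hval : ValidRVT (lift (RVT.R :: RVT.V :: xs0)) := by
              rw [hlift]
              refine ⟨by rw [List.replicate_succ, List.cons_append]; rfl, ?_⟩
              exact NoTR_replicateR (s+1) hnoz (by simp)
            obtain ⟨⟨m0, tl0, hp0, hm0, hch0⟩, h2⟩ := ih _ hval hlen
            obtain ⟨m, t, tl, hp, hlt1, hlt2⟩ := h2 (s+1) zt hlift
            rw [hp] at hp0
            injection hp0 with e1 e2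
            subst e1
            subst e2
            have hout : PCf (n+1) (RVT.R :: RVT.V :: xs0)
                = t :: (t + m) :: tl.map (· + m) := by
              rw [PCf_C n RVT.R xs0 zt s hall hs hz, hp]
              rfl
            rw [List.Chain', List.isChain_cons_cons] at hch0
            have hmt : m < t := hch0.1
            have ht1 : 1 ≤ t := by omega
            refine ⟨⟨t, (t + m) :: tl.map (· + m), hout, ht1, ?_⟩, ?_⟩
            · rw [List.Chain', List.isChain_cons_cons]
              refine ⟨by omega, ?_⟩
              have := chain_map_add m _ hch0.2
              simpa [List.Chain'] using this
            · intro k u hw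
              obtain ⟨hk1, hcons⟩ := k_eq_one hw (by decide)
              subst hk1
              injection hcons.symm with e3 e4
              refine ⟨t, t + m, tl.map (· + m), hout, by omega, by omega⟩
          | R =>
            -- case B, z = R :: zt
            have hlift2 : lift (RVT.R :: RVT.V :: xs0)
                = List.replicate (s + 2) RVT.R ++ zt := by
              rw [hlift, repl_cons]
            have hztT : zt.head? ≠ some RVT.T := by
              intro hT
              rcases NoTR_head hnoz hT with h' | h' <;> exact RVT.noConfusion h'
            have hval : ValidRVT (lift (RVT.R :: RVT.V :: xs0)) := by
              rw [hlift2]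
              refine ⟨by rw [show s + 2 = (s+1) + 1 from rfl, List.replicate_succ, List.cons_append]; rfl, ?_⟩
              exact NoTR_replicateR (s+2) (NoTR_tail hnoz) hztT
            obtain ⟨⟨m, tl, hp, hm, hch⟩, h2⟩ := ih _ hval hlen
            have hout : PCf (n+1) (RVT.R :: RVT.V :: xs0)
                = (s + 2) * m :: (s + 3) * m :: tl.map (· + m) := by
              rw [PCf_B n RVT.R xs0 (RVT.R :: zt) s hall hs hz (by simp), hp]
              rfl
            have hmpos : 0 < m := hm
            have hd1 : (s + 2) * m < (s + 3) * m :=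
              (Nat.mul_lt_mul_right hmpos).mpr (by omega)
            have hjunction : ∀ t2 tl2, tl = t2 :: tl2 → (s + 2) * m < t2 := by
              intro t2 tl2 htl
              by_cases hall2 : ((lift (RVT.R :: RVT.V :: xs0)).all (· = RVT.R) = true)
              · rw [PCf_allR _ _ hall2] at hp
                rw [htl] at hp
                exact absurd hp.symm (by simp)
              · rcases split_lead _ hval.2 (by rw [hval.1]; simp) with hall2' | ⟨j, u1, hj⟩
                · exact absurd hall2' hall2
                · have hjs : s + 2 ≤ j := by
                    apply repl_le (u := zt)
                    rw [← hlift2, hj]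
                  obtain ⟨m1, t1, tl1, hp1, hj1, _⟩ := h2 j u1 hj
                  rw [hp, htl] at hp1
                  injection hp1 with e1 e2
                  injection e2 with e3 e4
                  subst e1; subst e3
                  have : (s + 2) * m ≤ j * m := Nat.mul_le_mul_right m hjs
                  linarith
            have hchain : List.Chain' (· < ·)
                ((s + 2) * m :: (s + 3) * m :: tl.map (· + m)) := by
              rcases tl with _ | ⟨t2, tl2⟩
              · simp [List.Chain', List.isChain_cons_cons, hd1, List.isChain_singleton]
              · have hj2 := hjunction t2 tl2 rfl
                have e : (s + 3) * m = (s + 2) * m + m := by ring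
                rw [List.map_cons, List.Chain', List.isChain_cons_cons, List.isChain_cons_cons]
                refine ⟨hd1, by omega, ?_⟩
                have := chain_map_add m _ (List.isChain_cons_cons.mp hch).2
                simpa [List.Chain'] using this
            have hhead1 : 1 ≤ (s + 2) * m := Nat.mul_pos (by omega) hmpos
            refine ⟨⟨(s+2)*m, (s+3)*m :: tl.map (· + m), hout, hhead1, hchain⟩, ?_⟩
            intro k u hw
            obtain ⟨hk1, _⟩ := k_eq_one hw (by decide)
            subst hk1
            refine ⟨(s+2)*m, (s+3)*m, tl.map (· + m), hout, ?_, ?_⟩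
            · rw [one_mul]; exact hd1
            · have e : (1 + 1) * ((s + 2) * m) = (2 * (s + 2)) * m := by ring
              rw [e]
              exact (Nat.mul_lt_mul_right hmpos).mpr (by omega)

end Master
section Final

lemma tau_eq {xs0 z' : List RVT} {τ s : ℕ} (hs : countT xs0 = s)
    (he : xs0 = List.replicate τ RVT.T ++ z') (hz' : z'.head? ≠ some RVT.T) : τ = s := by
  rw [he, countT_replicate_append τ z' hz'] at hs
  exact hs

lemma drop_repl (τ : ℕ) (z' : List RVT) :
    (List.replicate τ RVT.T ++ z').drop τ = z' := by
  have := List.drop_left (l₁ := List.replicate τ RVT.T) (l₂ := z')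
  rwa [List.length_replicate] at this

lemma caseA_conc (l0 l1 τ : ℕ) (hm : 1 ≤ l0) (hgt : 2 * l0 < l1) :
    ¬ (l0 = (τ + 2) * (l1 - l0) ∧ l1 = (τ + 3) * (l1 - l0)) ∧
    ¬ ((τ + 1) * (l1 - l0) < l0 ∧ l0 < (τ + 2) * (l1 - l0)) := by
  constructor
  · rintro ⟨e0, e1⟩
    have h2 : 1 * (l1 - l0) ≤ (τ + 2) * (l1 - l0) := Nat.mul_le_mul_right _ (by omega)
    rw [one_mul] at h2
    rw [← e0] at h2
    omega
  · rintro ⟨c1, c2⟩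
    have hd : l0 < l1 - l0 := by omega
    have h2 : l1 - l0 ≤ (τ + 1) * (l1 - l0) := Nat.le_mul_of_pos_left _ (by omega)
    linarith

lemma caseB_conc (s m l0 l1 : ℕ) (hm : 1 ≤ m) (hl0 : l0 = (s + 2) * m)
    (hl1 : l1 = (s + 3) * m) :
    (∀ τ, (l0 = (τ + 2) * (l1 - l0) ∧ l1 = (τ + 3) * (l1 - l0)) ↔ τ = s) ∧
    ¬ (2 * l0 < l1) ∧
    (∀ τ, ¬ ((τ + 1) * (l1 - l0) < l0 ∧ l0 < (τ + 2) * (l1 - l0))) := by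
  have e : (s + 3) * m = (s + 2) * m + m := by ring
  have hl : l1 = l0 + m := by rw [hl0, hl1, e]
  have hd : l1 - l0 = m := by omega
  refine ⟨?_, ?_, ?_⟩
  · intro τ
    constructor
    · rintro ⟨e0, _⟩
      rw [hd, hl0] at e0
      have := Nat.eq_of_mul_eq_mul_right (show 0 < m by omega) e0
      omega
    · rintro rfl
      rw [hd, hl0, hl1]
      exact ⟨rfl, rfl⟩
  · intro hgt
    have h2 : 1 * m ≤ (s + 2) * m := Nat.mul_le_mul_right _ (by omega)
    rw [one_mul] at h2
    omega
  · intro τ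
    rintro ⟨c1, c2⟩
    rw [hd, hl0] at c1 c2
    have d1 := Nat.lt_of_mul_lt_mul_right c1
    have d2 := Nat.lt_of_mul_lt_mul_right c2
    omega

lemma caseC_conc (s m t l0 l1 : ℕ) (hm : 1 ≤ m) (h1 : (s + 1) * m < t)
    (h2 : t < (s + 2) * m) (hl0 : l0 = t) (hl1 : l1 = t + m) :
    (∀ τ, ((τ + 1) * (l1 - l0) < l0 ∧ l0 < (τ + 2) * (l1 - l0)) ↔ τ = s) ∧
    ¬ (2 * l0 < l1) ∧
    (∀ τ, ¬ (l0 = (τ + 2) * (l1 - l0) ∧ l1 = (τ + 3) * (l1 - l0))) := by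
  have hd : l1 - l0 = m := by omega
  have hmt : m < t := by
    have h3 : 1 * m ≤ (s + 1) * m := Nat.mul_le_mul_right _ (by omega)
    rw [one_mul] at h3
    omega
  refine ⟨?_, ?_, ?_⟩
  · intro τ
    constructor
    · rintro ⟨c1, c2⟩
      rw [hd, hl0] at c1 c2
      have d1 := Nat.lt_of_mul_lt_mul_right (lt_trans c1 h2)
      have d2 := Nat.lt_of_mul_lt_mul_right (lt_trans h1 c2)
      omega
    · rintro rfl
      rw [hd, hl0]
      exact ⟨h1, h2⟩
  · intro hgt
    omega
  · intro τ
    rintro ⟨e0, _⟩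
    rw [hd, hl0] at e0
    rw [e0] at h1 h2
    have d1 := Nat.lt_of_mul_lt_mul_right h1
    have d2 := Nat.lt_of_mul_lt_mul_right h2
    omega

end Final
/-- Characterization of the three structural cases of an RVT code word `W`
with Puiseux characteristic `[l0; l1, ...]` (so `g ≥ 1`):
`W` begins `RR` iff `l1 > 2 l0`; `W` begins `R V T^τ R` or equals `R V T^τ`
iff `l0 = (τ+2)(l1−l0)` and `l1 = (τ+3)(l1−l0)`; `W` begins `R V T^τ V` iff
`(τ+1)(l1−l0) < l0 < (τ+2)(l1−l0)`. -/
theorem statement4 (W : List RVT) (hW : ValidRVT W) (l0 l1 : ℕ) (rest : List ℕ)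
    (hPC : PC W = l0 :: l1 :: rest) :
    ((∃ u, W = RVT.R :: RVT.R :: u) ↔ l1 > 2 * l0) ∧
    (∀ τ : ℕ,
      ((∃ u, W = RVT.R :: RVT.V :: (List.replicate τ RVT.T ++ RVT.R :: u)) ∨
          W = RVT.R :: RVT.V :: List.replicate τ RVT.T)
        ↔ (l0 = (τ + 2) * (l1 - l0) ∧ l1 = (τ + 3) * (l1 - l0))) ∧
    (∀ τ : ℕ,
      (∃ u, W = RVT.R :: RVT.V :: (List.replicate τ RVT.T ++ RVT.V :: u))
        ↔ ((τ + 1) * (l1 - l0) < l0 ∧ l0 < (τ + 2) * (l1 - l0))) := by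
  obtain ⟨hh, hno⟩ := hW
  rcases W with _ | ⟨x, rest0⟩
  · simp at hh
  have hx : x = RVT.R := by simpa using hh
  subst hx
  rw [PC] at hPC
  by_cases hall : ((RVT.R :: rest0).all (· = RVT.R) = true)
  · rw [PCf_allR _ _ hall] at hPC
    simp at hPC
  rcases rest0 with _ | ⟨y, xs0⟩
  · exact absurd (by decide) hall
  cases y with
  | T =>
    exfalso
    have := hno 0 (by simp)
    simp at this
  | R =>
    -- case A : W = R :: R :: xs0
    rcases split_lead _ hno (by simp) with hall' | ⟨j, u1, hj⟩
    · exact absurd hall' hall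
    have hj2 : 2 ≤ j := repl_le (show List.replicate 2 RVT.R ++ xs0 = _ from hj)
    have hvalid : ValidRVT (RVT.R :: RVT.R :: xs0) := ⟨rfl, hno⟩
    obtain ⟨⟨m0, tl0, hp0, hm0, _⟩, h2⟩ :=
      master (RVT.R :: RVT.R :: xs0).length _ hvalid (le_refl _)
    obtain ⟨m, t, tl, hp, hlt1, _⟩ := h2 j u1 hj
    rw [hp] at hp0 hPC
    injection hp0 with e1 _
    subst e1
    injection hPC with e1 e2
    injection e2 with e2 _
    have hgt : 2 * l0 < l1 := by
      rw [← e1, ← e2]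
      have h3 : 2 * m ≤ j * m := Nat.mul_le_mul_right _ hj2
      linarith
    have hml0 : 1 ≤ l0 := by rw [← e1]; exact hm0
    refine ⟨⟨fun _ => hgt, fun _ => ⟨xs0, rfl⟩⟩, ?_, ?_⟩
    · intro τ
      constructor
      · rintro (⟨u2, he⟩ | he) <;> simp at he
      · rintro he
        exact absurd he (caseA_conc l0 l1 τ hml0 hgt).1
    · intro τ
      constructor
      · rintro ⟨u2, he⟩
        simp at he
      · rintro he
        exact absurd he (caseA_conc l0 l1 τ hml0 hgt).2
  | V =>
    -- cases B and C : W = R :: V :: xs0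
    obtain ⟨hxs, hzT⟩ := countT_spec xs0
    obtain ⟨s, hs⟩ : ∃ s, countT xs0 = s := ⟨_, rfl⟩
    obtain ⟨z, hz⟩ : ∃ z, xs0.drop s = z := ⟨_, rfl⟩
    rw [hs, hz] at hxs hzT
    have hnoz : NoTR z := by
      rw [← hz]
      exact NoTR_drop (NoTR_tail (NoTR_tail hno)) s
    have hdeT : deT xs0 = List.replicate s RVT.R ++ z := by
      conv_lhs => rw [hxs]
      exact deT_replicate_append s z hzT
    have hlift : lift (RVT.R :: RVT.V :: xs0) = List.replicate (s + 1) RVT.R ++ z := by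
      show reg (RVT.V :: xs0) = _
      rw [show reg (RVT.V :: xs0) = RVT.R :: deT xs0 from rfl, hdeT,
        List.replicate_succ, List.cons_append]
    have hlen : (lift (RVT.R :: RVT.V :: xs0)).length ≤ xs0.length + 1 := by
      rw [lift_length]
      simp
    rw [show (RVT.R :: RVT.V :: xs0).length = xs0.length + 1 + 1 by simp] at hPC
    -- structural iff helpers
    have struct1 : ∀ τ : ℕ,
        ((∃ u, RVT.R :: RVT.V :: xs0
            = RVT.R :: RVT.V :: (List.replicate τ RVT.T ++ RVT.R :: u)) ∨
          RVT.R :: RVT.V :: xs0 = RVT.R :: RVT.V :: List.replicate τ RVT.T)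
        → τ = s ∧ ((∃ u, z = RVT.R :: u) ∨ z = []) := by
      intro τ h
      rcases h with ⟨u2, he⟩ | he
      · have he' : xs0 = List.replicate τ RVT.T ++ RVT.R :: u2 := by
          injection he with _ he'
          injection he' with _ he''
        have hts : τ = s := tau_eq hs he' (by simp)
        subst hts
        refine ⟨rfl, Or.inl ⟨u2, ?_⟩⟩
        rw [← hz, he', drop_repl]
      · have he' : xs0 = List.replicate τ RVT.T ++ [] := by
          simp only [List.append_nil]
          injection he with _ he'
          injection he' with _ he''
        have hts : τ = s := tau_eq hs he' (by simp)
        subst hts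
        refine ⟨rfl, Or.inr ?_⟩
        rw [← hz, he', drop_repl]
    have struct2 : ∀ τ : ℕ,
        (∃ u, RVT.R :: RVT.V :: xs0
            = RVT.R :: RVT.V :: (List.replicate τ RVT.T ++ RVT.V :: u))
        → τ = s ∧ ∃ u, z = RVT.V :: u := by
      intro τ ⟨u2, he⟩
      have he' : xs0 = List.replicate τ RVT.T ++ RVT.V :: u2 := by
        injection he with _ he'
        injection he' with _ he''
      have hts : τ = s := tau_eq hs he' (by simp)
      subst hts
      refine ⟨rfl, ⟨u2, ?_⟩⟩
      rw [← hz, he', drop_repl]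
    rcases z with _ | ⟨zh, zt⟩
    · -- z = [] : case B, lift is all R's
      have hliftR : lift (RVT.R :: RVT.V :: xs0) = List.replicate (s + 1) RVT.R := by
        simpa using hlift
      have hallR : ((List.replicate (s + 1) RVT.R).all (· = RVT.R)) = true := by
        rw [List.all_eq_true]
        intro a ha
        simp [List.eq_of_mem_replicate ha]
      have hp : PCf (xs0.length + 1) (lift (RVT.R :: RVT.V :: xs0)) = [1] := by
        rw [hliftR]; exact PCf_allR _ _ hallR
      have hout : PCf (xs0.length + 1 + 1) (RVT.R :: RVT.V :: xs0)
          = (s + 2) * 1 :: (s + 3) * 1 :: [] := by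
        rw [PCf_B _ RVT.R xs0 [] s hall hs hz (by simp), hp]
        rfl
      rw [hout] at hPC
      injection hPC with e1 e2
      injection e2 with e2 _
      obtain ⟨hBiff, hnRR, hnC⟩ :=
        caseB_conc s 1 l0 l1 (le_refl 1) e1.symm e2.symm
      refine ⟨?_, ?_, ?_⟩
      · constructor
        · rintro ⟨u2, he⟩; simp at he
        · intro hgt; exact absurd hgt hnRR
      · intro τ
        rw [hBiff τ]
        constructor
        · intro h; exact (struct1 τ h).1
        · rintro rfl
          right
          rw [hxs, List.append_nil]
      · intro τ
        constructor
        · intro h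
          obtain ⟨_, ⟨u, hu⟩⟩ := struct2 τ h
          simp at hu
        · intro h; exact absurd h (hnC τ)
    · cases zh with
      | T => simp at hzT
      | V =>
        -- case C
        have hval : ValidRVT (lift (RVT.R :: RVT.V :: xs0)) := by
          rw [hlift]
          refine ⟨by rw [List.replicate_succ, List.cons_append]; rfl, ?_⟩
          exact NoTR_replicateR (s + 1) hnoz (by simp)
        obtain ⟨⟨m0, tl0, hp0, hm0, hch0⟩, h2⟩ := master (xs0.length + 1) _ hval hlen
        obtain ⟨m, t, tl, hp, hlt1, hlt2⟩ := h2 (s + 1) zt hlift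
        rw [hp] at hp0
        injection hp0 with e1 e2
        subst e1
        have hout : PCf (xs0.length + 1 + 1) (RVT.R :: RVT.V :: xs0)
            = t :: (t + m) :: tl.map (· + m) := by
          rw [PCf_C _ RVT.R xs0 zt s hall hs hz, hp]
          rfl
        rw [hout] at hPC
        injection hPC with e1 e2
        injection e2 with e2 _
        obtain ⟨hCiff, hnRR, hnB⟩ :=
          caseC_conc s m t l0 l1 hm0 hlt1 hlt2 e1.symm e2.symm
        refine ⟨?_, ?_, ?_⟩
        · constructor
          · rintro ⟨u2, he⟩; simp at he
          · intro hgt; exact absurd hgt hnRR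
        · intro τ
          constructor
          · intro h
            obtain ⟨_, h'⟩ := struct1 τ h
            rcases h' with ⟨u, hu⟩ | hu <;> simp at hu
          · intro h; exact absurd h (hnB τ)
        · intro τ
          rw [hCiff τ]
          constructor
          · intro h; exact (struct2 τ h).1
          · rintro rfl
            exact ⟨zt, by rw [hxs]⟩
      | R =>
        -- case B, z = R :: zt
        have hlift2 : lift (RVT.R :: RVT.V :: xs0)
            = List.replicate (s + 2) RVT.R ++ zt := by
          rw [hlift, repl_cons]
        have hztT : zt.head? ≠ some RVT.T := by
          intro hT
          rcases NoTR_head hnoz hT with h' | h' <;> exact RVT.noConfusion h'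
        have hval : ValidRVT (lift (RVT.R :: RVT.V :: xs0)) := by
          rw [hlift2]
          refine ⟨by rw [show s + 2 = (s + 1) + 1 from rfl, List.replicate_succ,
            List.cons_append]; rfl, ?_⟩
          exact NoTR_replicateR (s + 2) (NoTR_tail hnoz) hztT
        obtain ⟨⟨m, tl, hp, hm, hch⟩, h2⟩ := master (xs0.length + 1) _ hval hlen
        have hout : PCf (xs0.length + 1 + 1) (RVT.R :: RVT.V :: xs0)
            = (s + 2) * m :: (s + 3) * m :: tl.map (· + m) := by
          rw [PCf_B _ RVT.R xs0 (RVT.R :: zt) s hall hs hz (by simp), hp]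
          rfl
        rw [hout] at hPC
        injection hPC with e1 e2
        injection e2 with e2 _
        obtain ⟨hBiff, hnRR, hnC⟩ := caseB_conc s m l0 l1 hm e1.symm e2.symm
        refine ⟨?_, ?_, ?_⟩
        · constructor
          · rintro ⟨u2, he⟩; simp at he
          · intro hgt; exact absurd hgt hnRR
        · intro τ
          rw [hBiff τ]
          constructor
          · intro h; exact (struct1 τ h).1
          · rintro rfl
            exact Or.inl ⟨zt, by rw [hxs]⟩
        · intro τ
          constructor
          · intro h
            obtain ⟨_, ⟨u, hu⟩⟩ := struct2 τ h
            simp at hu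
          · intro h; exact absurd h (hnC τ)
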